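/- Let G be a finite connected simple graph, r ∈ ℕ, D a distance-r dominating set of G, and id : V(G) → ℕ injective. Then the family 𝓑(D) = {B(v) : v ∈ D} of D-partition classes is a partition of V(G) into nonempty parts, and for every v ∈ D the induced subgraph G[B(v)] is connected of radius at most r; indeed every w ∈ B(v) is joined to v by a path of length at most r all of whose vertices lie in B(v). -/

import Mathlib

/-- `u` is weakly `s`-reachable from `v` w.r.t. the linear order on `V`:
there is a path of length at most `s` between `u` and `v` on which `u` is minimum. -/
def wreach {V : Type*} [LinearOrder V] (G : SimpleGraph V) (s : ℕ) (v : V) : Set V :=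
  {u | ∃ p : G.Walk u v, p.IsPath ∧ p.length ≤ s ∧ ∀ x ∈ p.support, u ≤ x}

/-- The closed `r`-neighborhood `N_r[v]`. -/
def ball {V : Type*} (G : SimpleGraph V) (r : ℕ) (v : V) : Set V :=
  {u | ∃ p : G.Walk v u, p.length ≤ r}

/-- `D` is a distance-`r` dominating set. -/
def isRDom {V : Type*} (G : SimpleGraph V) (r : ℕ) (D : Set V) : Prop :=
  ∀ w : V, ∃ v ∈ D, w ∈ ball G r v

/-- The lexicographic order on paths with respect to an injection `idf : V → ℕ`:
a shorter path is smaller; paths of equal length are compared by the lexicographic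
order of the `idf`-sequences of their vertices. -/
def walkLE {V : Type*} (idf : V → ℕ) {G : SimpleGraph V} {a b c d : V}
    (p : G.Walk a b) (q : G.Walk c d) : Prop :=
  p.length < q.length ∨ (p.length = q.length ∧ p.support.map idf ≤ q.support.map idf)

/-- The class of `v` in the `D`-partition, with respect to a choice `P` of
lexicographically least paths: `B(v) = {w : P(v,w) ≤_lex P(u,w) for all u ∈ D, u ≠ v}`. -/
def Bpart {V : Type*} {G : SimpleGraph V} (idf : V → ℕ) (D : Set V)
    (P : ∀ v w : V, G.Walk v w) (v : V) : Set V :=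
  {w | ∀ u ∈ D, u ≠ v → walkLE idf (P v w) (P u w)}

open SimpleGraph Walk

/-- If two lists of equal length are in strict lexicographic relation, appending a common
tail preserves the strict relation. -/
lemma lexAppend {α : Type*} [LinearOrder α] :
    ∀ {l₁ l₂ : List α}, List.Lex (· < ·) l₁ l₂ → l₁.length = l₂.length →
      ∀ t : List α, List.Lex (· < ·) (l₁ ++ t) (l₂ ++ t) := by
  intro l₁ l₂ h
  induction h with
  | nil => intro hlen; simp at hlen
  | rel h => intro _ t; exact List.Lex.rel h
  | cons h ih => intro hlen t; exact List.Lex.cons (ih (by simpa using hlen) t)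

/-- The key of a walk: its length together with the `idf`-sequence of its support,
in the lexicographic product order. -/
noncomputable def wkey {V : Type*} (idf : V → ℕ) {G : SimpleGraph V} {a b : V}
    (p : G.Walk a b) : ℕ ×ₗ List ℕ := toLex (p.length, p.support.map idf)

lemma walkLE_iff {V : Type*} (idf : V → ℕ) {G : SimpleGraph V} {a b c d : V}
    (p : G.Walk a b) (q : G.Walk c d) :
    walkLE idf p q ↔ wkey idf p ≤ wkey idf q := by
  rw [wkey, wkey, Prod.Lex.le_iff]; rfl

lemma walkLE_length {V : Type*} {idf : V → ℕ} {G : SimpleGraph V} {a b c d : V}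
    {p : G.Walk a b} {q : G.Walk c d} (h : walkLE idf p q) : p.length ≤ q.length := by
  rcases h with h | ⟨h, _⟩ <;> omega

section
variable {V : Type*} [DecidableEq V] {G : SimpleGraph V} {idf : V → ℕ} {D : Set V}
  {P : ∀ v w : V, G.Walk v w}

/-- Key hereditary property: every vertex on the chosen least path `P v w` to a
vertex `w` of `B(v)` again belongs to `B(v)`. -/
lemma support_mem_Bpart
    (hP : ∀ v w : V, (P v w).IsPath ∧ ∀ q : G.Walk v w, q.IsPath → walkLE idf (P v w) q)
    {v w : V} (hw : w ∈ Bpart idf D P v)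
    {x : V} (hx : x ∈ (P v w).support) : x ∈ Bpart idf D P v := by
  intro u hu huv
  by_contra hcon
  rw [walkLE_iff] at hcon
  have hlt : wkey idf (P u x) < wkey idf (P v x) := not_le.mp hcon
  set p := P v w with hpdef
  have hp : p.IsPath := (hP v w).1
  have hp₁ : (p.takeUntil x hx).IsPath := hp.takeUntil hx
  have hp₂ : (p.dropUntil x hx).IsPath := hp.dropUntil hx
  have hspec : (p.takeUntil x hx).append (p.dropUntil x hx) = p := p.take_spec hx
  have hlenp : (p.takeUntil x hx).length + (p.dropUntil x hx).length = p.length := by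
    conv_rhs => rw [← hspec]
    rw [Walk.length_append]
  have hP1 : wkey idf (P v x) ≤ wkey idf (p.takeUntil x hx) :=
    (walkLE_iff _ _ _).mp ((hP v x).2 _ hp₁)
  have hlt1 : wkey idf (P u x) < wkey idf (p.takeUntil x hx) := lt_of_lt_of_le hlt hP1
  have hvw : walkLE idf (P v w) (P u w) := hw u hu huv
  have hvwlen : p.length ≤ (P u w).length := walkLE_length hvw
  have short : ∀ q : G.Walk u w, q.length < p.length → False := by
    intro q hq
    have h1 := walkLE_length ((hP u w).2 q.bypass q.bypass_isPath)
    have h2 := q.length_bypass_le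
    omega
  simp only [wkey, Prod.Lex.lt_iff, ofLex_toLex] at hlt1
  rcases hlt1 with hL | ⟨hE, hLex⟩
  · exact short ((P u x).append (p.dropUntil x hx))
      (by rw [Walk.length_append]; omega)
  · by_cases hq : ((P u x).append (p.dropUntil x hx)).IsPath
    · have h1 : walkLE idf (P u w) ((P u x).append (p.dropUntil x hx)) := (hP u w).2 _ hq
      have hqlen : ((P u x).append (p.dropUntil x hx)).length = p.length := by
        rw [Walk.length_append]; omega
      have hsupp : p.support = (p.takeUntil x hx).support ++ (p.dropUntil x hx).support.tail := by
        conv_lhs => rw [← hspec]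
        exact Walk.support_append _ _
      have hlenmap : ((P u x).support.map idf).length
          = ((p.takeUntil x hx).support.map idf).length := by
        simp [Walk.length_support, hE]
      have hstrict : ((P u x).append (p.dropUntil x hx)).support.map idf < p.support.map idf := by
        rw [Walk.support_append, hsupp, List.map_append, List.map_append]
        exact lexAppend hLex hlenmap _
      rcases hvw with hbad | ⟨_, hle1⟩
      · exact absurd ((walkLE_length h1).trans hqlen.le) (not_le.mpr hbad)
      rcases h1 with hbad | ⟨_, hle2⟩
      · omega
      exact absurd (lt_of_le_of_lt (le_trans hle1 hle2) hstrict) (lt_irrefl _)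
    · have hnodA : (P u x).support.Nodup := (hP u x).1.support_nodup
      have hnodT : (p.dropUntil x hx).support.tail.Nodup :=
        List.Nodup.sublist (List.tail_sublist _) hp₂.support_nodup
      have hnp : ¬ ((P u x).append (p.dropUntil x hx)).support.Nodup := by
        rwa [← Walk.isPath_def]
      rw [Walk.support_append, List.nodup_append] at hnp
      push_neg at hnp
      obtain ⟨y, hyA, hyT⟩ :
          ∃ y, y ∈ (P u x).support ∧ y ∈ (p.dropUntil x hx).support.tail := by
        by_contra hc
        push_neg at hc
        obtain ⟨a, ha, b, hb, hab⟩ := hnp hnodA hnodT; exact hc a ha (by rw [hab]; exact hb)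
      have hyP : y ∈ (p.dropUntil x hx).support := List.mem_of_mem_tail hyT
      have hyx : y ≠ x := by
        intro h; subst h
        have hn := hp₂.support_nodup
        rw [Walk.support_eq_cons] at hn
        exact (List.nodup_cons.mp hn).1 hyT
      have ht1 : 1 ≤ ((p.dropUntil x hx).takeUntil y hyP).length := by
        rcases Nat.eq_zero_or_pos ((p.dropUntil x hx).takeUntil y hyP).length with h0 | h
        · exact absurd (Walk.eq_of_length_eq_zero h0).symm hyx
        · exact h
      have ht2 : ((p.dropUntil x hx).takeUntil y hyP).length
          + ((p.dropUntil x hx).dropUntil y hyP).length = (p.dropUntil x hx).length := by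
        conv_rhs => rw [← (p.dropUntil x hx).take_spec hyP]
        rw [Walk.length_append]
      have ht3 : ((P u x).takeUntil y hyA).length ≤ (P u x).length :=
        Walk.length_takeUntil_le _ _
      exact short (((P u x).takeUntil y hyA).append ((p.dropUntil x hx).dropUntil y hyP))
        (by rw [Walk.length_append]; omega)

omit [DecidableEq V] in
/-- A walk whose support lies in `S` yields reachability in the induced subgraph. -/
lemma induce_reachable {S : Set V} :
    ∀ {a b : V} (p : G.Walk a b) (hs : ∀ x ∈ p.support, x ∈ S),
      (G.induce S).Reachable ⟨a, hs a p.start_mem_support⟩ ⟨b, hs b p.end_mem_support⟩ := by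
  intro a b p
  induction p with
  | nil => intro _; exact Reachable.refl _
  | @cons a c b h q ih =>
    intro hs
    have hs' : ∀ x ∈ q.support, x ∈ S := fun x hx => hs x (by simp [hx])
    have hadj : (G.induce S).Adj ⟨a, hs a (by simp)⟩ ⟨c, hs' c q.start_mem_support⟩ := h
    exact (hadj.reachable).trans (ih hs')

end

/-- for a connected `G`, a distance-`r` dominating set `D`, an injective
`idf : V → ℕ`, and `P v w` the `≤_lex`-least path from `v` to `w`, the family
`{B(v) : v ∈ D}` is a partition of `V(G)` into nonempty parts, and each `G[B(v)]` is
connected of radius at most `r`: every `w ∈ B(v)` is joined to `v` by a path of length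
at most `r` all of whose vertices lie in `B(v)`. -/
theorem stmt10 {V : Type*} [Fintype V] (G : SimpleGraph V) (hG : G.Connected) (r : ℕ)
    (D : Set V) (hD : isRDom G r D)
    (idf : V → ℕ) (hinj : Function.Injective idf)
    (P : ∀ v w : V, G.Walk v w)
    (hP : ∀ v w : V, (P v w).IsPath ∧ ∀ q : G.Walk v w, q.IsPath → walkLE idf (P v w) q) :
    -- the classes cover `V(G)`
    (∀ w : V, ∃ v ∈ D, w ∈ Bpart idf D P v) ∧
    -- distinct classes are disjoint
    (∀ v ∈ D, ∀ u ∈ D, v ≠ u → Disjoint (Bpart idf D P v) (Bpart idf D P u)) ∧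
    -- the classes are nonempty
    (∀ v ∈ D, (Bpart idf D P v).Nonempty) ∧
    -- each class induces a connected subgraph
    (∀ v ∈ D, (G.induce (Bpart idf D P v)).Connected) ∧
    -- of radius at most `r`, with center `v`
    (∀ v ∈ D, ∀ w ∈ Bpart idf D P v,
      ∃ p : G.Walk v w, p.length ≤ r ∧ ∀ x ∈ p.support, x ∈ Bpart idf D P v) := by
  classical
  have cover : ∀ w : V, ∃ v ∈ D, w ∈ Bpart idf D P v := by
    intro w
    obtain ⟨v0, hv0, -⟩ := hD w
    obtain ⟨v, hvD, hmin⟩ := Set.exists_min_image D (fun u => wkey idf (P u w))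
      (Set.toFinite D) ⟨v0, hv0⟩
    exact ⟨v, hvD, fun u hu _ => (walkLE_iff idf _ _).mpr (hmin u hu)⟩
  have selfmem : ∀ v : V, v ∈ Bpart idf D P v := by
    intro v u hu huv
    have h0 : (P v v).length = 0 := by
      have := walkLE_length ((hP v v).2 Walk.nil Walk.IsPath.nil)
      simpa using this
    left
    rw [h0]
    exact Nat.pos_of_ne_zero fun h => huv (Walk.eq_of_length_eq_zero h)
  have lenle : ∀ v ∈ D, ∀ w ∈ Bpart idf D P v, (P v w).length ≤ r := by
    intro v hv w hw
    obtain ⟨u, hu, q, hq⟩ := hD w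
    have hb := walkLE_length ((hP u w).2 q.bypass q.bypass_isPath)
    have hb2 := q.length_bypass_le
    by_cases h : u = v
    · subst h; omega
    · have := walkLE_length (hw u hu h); omega
  refine ⟨cover, ?_, ?_, ?_, ?_⟩
  · intro v hv u hu hne
    rw [Set.disjoint_left]
    intro w hwv hwu
    have h1 := (walkLE_iff idf _ _).mp (hwv u hu hne.symm)
    have h2 := (walkLE_iff idf _ _).mp (hwu v hv hne)
    have heq : wkey idf (P v w) = wkey idf (P u w) := le_antisymm h1 h2
    have hmap : (P v w).support.map idf = (P u w).support.map idf := by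
      have := congrArg (fun x => (ofLex x).2) heq
      simpa [wkey] using this
    rw [Walk.support_eq_cons (P v w), Walk.support_eq_cons (P u w)] at hmap
    simp only [List.map_cons, List.cons.injEq] at hmap
    exact hne (hinj hmap.1)
  · exact fun v _ => ⟨v, selfmem v⟩
  · intro v hv
    rw [SimpleGraph.connected_iff]
    refine ⟨?_, ⟨⟨v, selfmem v⟩⟩⟩
    rintro ⟨a, ha⟩ ⟨b, hb⟩
    have hra := induce_reachable (P v a) (fun x hx => support_mem_Bpart hP ha hx)
    have hrb := induce_reachable (P v b) (fun x hx => support_mem_Bpart hP hb hx)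
    exact hra.symm.trans hrb
  · intro v hv w hw
    exact ⟨P v w, lenle v hv w hw, fun x hx => support_mem_Bpart hP hw hx⟩
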